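/- Let k be a positive integer, A a nonempty finite set of integers, and B a nonempty finite set of integers. Let j be the number of distinct residues modulo k attained by elements of A. Then |A + k·B| ≥ |A| + j(|B| − 1). -/

import Mathlib

open Finset Pointwise

/-- Let `k` be a positive integer, `A`, `B` nonempty finite sets of integers, and `j` the
number of distinct residues modulo `k` attained by elements of `A`.
Then `|A + k·B| ≥ |A| + j(|B| − 1)`. -/
theorem stmt_4 (k : ℕ) (hk : 0 < k) (A B : Finset ℤ) (hA : A.Nonempty) (hB : B.Nonempty) :
    A.card + (A.image (fun a => a % (k : ℤ))).card * (B.card - 1) ≤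
      (A + B.image (fun b => (k : ℤ) * b)).card := by
  classical
  set R := A.image (fun a => a % (k : ℤ)) with hR
  set kB := B.image (fun b => (k : ℤ) * b) with hkB
  set Ar : ℤ → Finset ℤ := fun r => A.filter (fun a => a % (k : ℤ) = r) with hAr
  have hkBcard : kB.card = B.card := by
    rw [hkB]
    apply Finset.card_image_of_injective
    intro x y h
    exact mul_left_cancel₀ (by exact_mod_cast hk.ne') h
  have hdisj : ∀ r ∈ R, ∀ r' ∈ R, r ≠ r' →
      Disjoint (Ar r + kB) (Ar r' + kB) := by
    intro r _ r' _ hne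
    rw [Finset.disjoint_left]
    rintro x hx hx'
    have hmod : ∀ s : ℤ, x ∈ Ar s + kB → x % (k : ℤ) = s := by
      intro s hxs
      rw [Finset.mem_add] at hxs
      obtain ⟨a, ha, y, hy, rfl⟩ := hxs
      rw [hkB, Finset.mem_image] at hy
      obtain ⟨b, _, rfl⟩ := hy
      rw [hAr, Finset.mem_filter] at ha
      rw [Int.add_mul_emod_self_left]
      exact ha.2
    exact hne ((hmod r hx).symm.trans (hmod r' hx'))
  have hsub : R.biUnion (fun r => Ar r + kB) ⊆ A + kB := by
    intro x hx
    rw [Finset.mem_biUnion] at hx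
    obtain ⟨r, _, hx⟩ := hx
    exact Finset.add_subset_add_right (Finset.filter_subset _ _) hx
  have hle : ∀ r ∈ R, (Ar r).card + (B.card - 1) ≤ (Ar r + kB).card := by
    intro r hr
    have hArne : (Ar r).Nonempty := by
      rw [hR, Finset.mem_image] at hr
      obtain ⟨a, ha, rfl⟩ := hr
      exact ⟨a, Finset.mem_filter.2 ⟨ha, rfl⟩⟩
    have hkBne : kB.Nonempty := hB.image _
    have hcd := cauchy_davenport_add_of_linearOrder_isCancelAdd hArne hkBne
    have h1 : 1 ≤ (Ar r).card := hArne.card_pos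
    have h2 : 1 ≤ B.card := hB.card_pos
    rw [hkBcard] at hcd
    omega
  have hsum : ∑ r ∈ R, (Ar r).card = A.card := (Finset.card_eq_sum_card_image _ _).symm
  calc A.card + R.card * (B.card - 1)
      = ∑ r ∈ R, ((Ar r).card + (B.card - 1)) := by
        rw [Finset.sum_add_distrib, hsum, Finset.sum_const, smul_eq_mul]
    _ ≤ ∑ r ∈ R, (Ar r + kB).card := Finset.sum_le_sum hle
    _ = (R.biUnion (fun r => Ar r + kB)).card := (Finset.card_biUnion hdisj).symm
    _ ≤ (A + kB).card := Finset.card_le_card hsub
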